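/- Let ε > 0 and let a, b ≥ 0 be reals. Then |qual_ε(a + 1, b) − qual_ε(a, b)| ≤ f_ε(x*(ε)), where qual_ε(a, b) = min(a, b)·(1 − g_ε(|a − b|)) + max(a, b)·g_ε(|a − b|), g_ε(x) = (exp(−ε·x)/2)·(1 + ε·x/2), f_ε(x) = x·(g_ε(x − 1) − g_ε(x)) + (1 − g_ε(x − 1)), and x*(ε) = (ε·e^ε + sqrt(2 − (4 − ε²)·e^ε + 2·e^{2ε})) / (ε·e^ε − ε). That is, the global sensitivity of the per-cell grid quality function under addition of one tuple is at most B(ε) = f_ε(x*(ε)). -/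

import Mathlib

open Real

/-- `g_ε(x) = (exp(−ε·x)/2)·(1 + ε·x/2)`. -/
noncomputable def gFn (ε x : ℝ) : ℝ := Real.exp (-ε * x) / 2 * (1 + ε * x / 2)

/-- Quality of a cell with `a` positive and `b` negative instances. -/
noncomputable def qualFn (ε a b : ℝ) : ℝ :=
  min a b * (1 - gFn ε |a - b|) + max a b * gFn ε |a - b|

/-- `f_ε(x) = x·(g_ε(x − 1) − g_ε(x)) + (1 − g_ε(x − 1))`. -/
noncomputable def fFn (ε x : ℝ) : ℝ :=
  x * (gFn ε (x - 1) - gFn ε x) + (1 - gFn ε (x - 1))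

/-- `x*(ε) = (ε·e^ε + sqrt(2 − (4 − ε²)·e^ε + 2·e^{2ε})) / (ε·e^ε − ε)`. -/
noncomputable def xstar (ε : ℝ) : ℝ :=
  (ε * Real.exp ε + Real.sqrt (2 - (4 - ε ^ 2) * Real.exp ε + 2 * Real.exp (2 * ε))) /
    (ε * Real.exp ε - ε)

noncomputable def phiFn (ε t : ℝ) : ℝ := t * gFn ε t
noncomputable def psiFn (ε x : ℝ) : ℝ := phiFn ε x - phiFn ε (x - 1)

lemma gFn_nonneg {ε t : ℝ} (hε : 0 < ε) (ht : 0 ≤ t) : 0 ≤ gFn ε t := by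
  unfold gFn
  have := Real.exp_pos (-ε * t)
  nlinarith [mul_nonneg hε.le ht]

lemma gFn_le_half {ε t : ℝ} (hε : 0 < ε) (ht : 0 ≤ t) : gFn ε t ≤ 1 / 2 := by
  unfold gFn
  have h1 : 1 + ε * t ≤ Real.exp (ε * t) := by
    have := Real.add_one_le_exp (ε * t); linarith
  have h2 : Real.exp (-ε * t) = (Real.exp (ε * t))⁻¹ := by
    rw [← Real.exp_neg]; ring_nf
  have h3 : 0 < Real.exp (ε * t) := Real.exp_pos _
  rw [h2]
  rw [div_mul_eq_mul_div, div_le_div_iff₀ (by norm_num) (by norm_num : (0:ℝ) < 2)]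
  have h4 : (Real.exp (ε * t))⁻¹ * (1 + ε * t / 2) ≤ 1 := by
    rw [inv_mul_le_iff₀ h3, mul_one]
    nlinarith [mul_nonneg hε.le ht]
  nlinarith

lemma phi_hasDerivAt (ε t : ℝ) :
    HasDerivAt (phiFn ε) (Real.exp (-ε * t) * (2 - ε ^ 2 * t ^ 2) / 4) t := by
  have h1 : HasDerivAt (fun x : ℝ => -ε * x) (-ε) t := by
    simpa using (hasDerivAt_id t).const_mul (-ε)
  have h2 : HasDerivAt (fun x : ℝ => Real.exp (-ε * x)) (Real.exp (-ε * t) * (-ε)) t := h1.exp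
  have h3 : HasDerivAt (fun x : ℝ => 1 + ε * x / 2) (ε / 2) t := by
    simpa using ((hasDerivAt_id t).const_mul ε).div_const 2 |>.const_add 1
  have h4 : HasDerivAt (fun x : ℝ => x * (Real.exp (-ε * x) / 2 * (1 + ε * x / 2)))
      (1 * (Real.exp (-ε * t) / 2 * (1 + ε * t / 2)) +
        t * ((Real.exp (-ε * t) * (-ε)) / 2 * (1 + ε * t / 2)
          + Real.exp (-ε * t) / 2 * (ε / 2))) t := by
    exact (hasDerivAt_id t).mul ((h2.div_const 2).mul h3)
  have : (1 * (Real.exp (-ε * t) / 2 * (1 + ε * t / 2)) +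
        t * ((Real.exp (-ε * t) * (-ε)) / 2 * (1 + ε * t / 2)
          + Real.exp (-ε * t) / 2 * (ε / 2))) = Real.exp (-ε * t) * (2 - ε ^ 2 * t ^ 2) / 4 := by
    ring
  rw [this] at h4
  exact h4

lemma phi'_abs_le {ε t : ℝ} (hε : 0 < ε) (ht : 0 ≤ t) :
    |Real.exp (-ε * t) * (2 - ε ^ 2 * t ^ 2) / 4| ≤ 1 := by
  set s := ε * t with hs
  have hs0 : 0 ≤ s := mul_nonneg hε.le ht
  have he : Real.exp (-s) * Real.exp s = 1 := by
    rw [← Real.exp_add]; simp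
  have hp : 0 < Real.exp (-s) := Real.exp_pos _
  have hq : 0 < Real.exp s := Real.exp_pos _
  have h2 : 1 + s / 2 ≤ Real.exp (s / 2) := by
    have := Real.add_one_le_exp (s / 2); linarith
  have h3 : Real.exp (s / 2) * Real.exp (s / 2) = Real.exp s := by
    rw [← Real.exp_add]; ring_nf
  have hsq : s ^ 2 ≤ 4 * Real.exp s := by
    nlinarith [Real.exp_pos (s / 2)]
  rw [abs_le]
  have hεt : ε ^ 2 * t ^ 2 = s ^ 2 := by rw [hs]; ring
  constructor
  · rw [show -ε * t = -s by rw [hs]; ring] at *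
    rw [hεt]
    nlinarith
  · rw [show -ε * t = -s by rw [hs]; ring] at *
    rw [hεt]
    nlinarith

lemma psi_hasDerivAt (ε x : ℝ) :
    HasDerivAt (psiFn ε)
      (Real.exp (-ε * x) * (2 - ε ^ 2 * x ^ 2) / 4
        - Real.exp (-ε * (x - 1)) * (2 - ε ^ 2 * (x - 1) ^ 2) / 4) x := by
  have h1 := phi_hasDerivAt ε x
  have h2 : HasDerivAt (fun y : ℝ => phiFn ε (y - 1))
      (Real.exp (-ε * (x - 1)) * (2 - ε ^ 2 * (x - 1) ^ 2) / 4) x := by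
    have := (phi_hasDerivAt ε (x - 1)).comp x ((hasDerivAt_id x).sub_const 1)
    simpa [Function.comp_def] using this
  exact h1.sub h2

lemma psi_abs_le {ε x : ℝ} (hε : 0 < ε) (hx : 1 ≤ x) : |psiFn ε x| ≤ 1 := by
  have hlt : x - 1 < x := by linarith
  have hcont : ContinuousOn (phiFn ε) (Set.Icc (x - 1) x) :=
    fun y _ => ((phi_hasDerivAt ε y).continuousAt).continuousWithinAt
  obtain ⟨c, hc, hceq⟩ := exists_hasDerivAt_eq_slope (phiFn ε)
    (fun t => Real.exp (-ε * t) * (2 - ε ^ 2 * t ^ 2) / 4) hlt hcont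
    (fun y _ => phi_hasDerivAt ε y)
  have hc0 : 0 ≤ c := by
    have := hc.1; linarith
  have := phi'_abs_le hε hc0
  have hslope : (phiFn ε x - phiFn ε (x - 1)) / (x - (x - 1)) = psiFn ε x := by
    unfold psiFn; field_simp; ring
  rw [hslope] at hceq
  rw [← hceq]
  exact this

section XS
variable {ε : ℝ} (hε : 0 < ε)

include hε in
lemma hE1 : 1 < Real.exp ε := by
  rw [show (1:ℝ) = Real.exp 0 by simp]
  exact Real.exp_lt_exp.2 hε

lemma hDval : 2 - (4 - ε ^ 2) * Real.exp ε + 2 * Real.exp (2 * ε)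
    = 2 * (Real.exp ε - 1) ^ 2 + ε ^ 2 * Real.exp ε := by
  have : Real.exp (2 * ε) = Real.exp ε * Real.exp ε := by
    rw [← Real.exp_add]; ring_nf
  rw [this]; ring

include hε in
lemma hD0 : 0 ≤ 2 - (4 - ε ^ 2) * Real.exp ε + 2 * Real.exp (2 * ε) := by
  rw [hDval]
  have := Real.exp_pos ε
  nlinarith [sq_nonneg (Real.exp ε - 1)]

include hε in
lemma hsgtε : ε < Real.sqrt (2 - (4 - ε ^ 2) * Real.exp ε + 2 * Real.exp (2 * ε)) := by
  have hE := hE1 hε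
  have h0 := hD0 hε
  nlinarith [Real.sq_sqrt h0, Real.sqrt_nonneg (2 - (4 - ε ^ 2) * Real.exp ε + 2 * Real.exp (2 * ε)),
    sq_nonneg (Real.exp ε - 1), Real.exp_pos ε, hDval (ε := ε),
    mul_pos (mul_pos hε hε) (sub_pos.2 hE)]

include hε in
lemma hdenom : ε * Real.exp ε - ε ≠ 0 := by
  have hE := hE1 hε
  nlinarith

include hε in
lemma hxu : xstar ε * (ε * (Real.exp ε - 1))
    = ε * Real.exp ε + Real.sqrt (2 - (4 - ε ^ 2) * Real.exp ε + 2 * Real.exp (2 * ε)) := by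
  have hd : ε * (Real.exp ε - 1) = ε * Real.exp ε - ε := by ring
  rw [xstar, hd, div_mul_cancel₀ _ (hdenom hε)]

include hε in
lemma xstar_gt_one : 1 < xstar ε := by
  have hE := hE1 hε
  have hs := hsgtε hε
  have hd : 0 < ε * (Real.exp ε - 1) := by nlinarith
  have hu := hxu hε
  nlinarith

end XS

section XS2
variable {ε : ℝ} (hε : 0 < ε)

include hε in
lemma hroot : ε ^ 2 * (Real.exp ε - 1) * (xstar ε) ^ 2 - 2 * ε ^ 2 * Real.exp ε * (xstar ε)
    + (ε ^ 2 * Real.exp ε - 2 * Real.exp ε + 2) = 0 := by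
  have hE := hE1 hε
  have hEne : Real.exp ε - 1 ≠ 0 := by linarith
  have hu := hxu hε
  have hs2 : (Real.sqrt (2 - (4 - ε ^ 2) * Real.exp ε + 2 * Real.exp (2 * ε))) ^ 2
      = 2 - (4 - ε ^ 2) * Real.exp ε + 2 * Real.exp (2 * ε) := Real.sq_sqrt (hD0 hε)
  have hexp : Real.exp (2 * ε) = Real.exp ε * Real.exp ε := by
    rw [← Real.exp_add]; ring_nf
  apply mul_left_cancel₀ hEne
  rw [mul_zero]
  linear_combination (xstar ε * (ε * (Real.exp ε - 1)) - ε * Real.exp ε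
      + Real.sqrt (2 - (4 - ε ^ 2) * Real.exp ε + 2 * Real.exp (2 * ε))) * hu + hs2 + 2 * hexp

include hε in
lemma hfac (x : ℝ) :
    (2 - ε ^ 2 * x ^ 2) - Real.exp ε * (2 - ε ^ 2 * (x - 1) ^ 2)
      = ε ^ 2 * (Real.exp ε - 1) * (x - xstar ε)
        * (x - (2 * Real.exp ε / (Real.exp ε - 1) - xstar ε)) := by
  have hE := hE1 hε
  have hEne : Real.exp ε - 1 ≠ 0 := by linarith
  have hr := hroot hε
  apply mul_left_cancel₀ hEne
  field_simp
  ring_nf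
  ring_nf at hr
  linear_combination hr
end XS2

section XS3
variable {ε : ℝ} (hε : 0 < ε)

include hε in
lemma hv_lt_one : 2 * Real.exp ε / (Real.exp ε - 1) - xstar ε < 1 := by
  have hE := hE1 hε
  have hEpos : (0:ℝ) < Real.exp ε - 1 := by linarith
  have hu := hxu hε
  have hs := hsgtε hε
  have h1 : (Real.exp ε + 1) * ε < xstar ε * (ε * (Real.exp ε - 1)) := by
    rw [hu]; nlinarith
  have h2 : Real.exp ε + 1 < xstar ε * (Real.exp ε - 1) := by
    have h3 : (Real.exp ε + 1) * ε < (xstar ε * (Real.exp ε - 1)) * ε := by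
      nlinarith
    exact lt_of_mul_lt_mul_right h3 hε.le
  rw [sub_lt_iff_lt_add, div_lt_iff₀ hEpos]
  nlinarith

include hε in
lemma psi_deriv_eq (x : ℝ) : deriv (psiFn ε) x
    = Real.exp (-ε * x) / 4
      * ((2 - ε ^ 2 * x ^ 2) - Real.exp ε * (2 - ε ^ 2 * (x - 1) ^ 2)) := by
  rw [(psi_hasDerivAt ε x).deriv]
  have h : Real.exp (-ε * (x - 1)) = Real.exp (-ε * x) * Real.exp ε := by
    rw [← Real.exp_add]; ring_nf
  rw [h]; ring

include hε in
lemma psi_anti : AntitoneOn (psiFn ε) (Set.Icc 1 (xstar ε)) := by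
  apply antitoneOn_of_deriv_nonpos (convex_Icc _ _)
  · exact fun y _ => ((psi_hasDerivAt ε y).continuousAt).continuousWithinAt
  · intro x _
    exact ((psi_hasDerivAt ε x).differentiableAt).differentiableWithinAt
  · intro x hx
    rw [interior_Icc] at hx
    rw [psi_deriv_eq hε x, hfac hε x]
    have hE := hE1 hε
    have h1 : x - xstar ε ≤ 0 := by linarith [hx.2]
    have h2 : 0 ≤ x - (2 * Real.exp ε / (Real.exp ε - 1) - xstar ε) := by
      have := hv_lt_one hε; linarith [hx.1]
    have hA : 0 ≤ ε ^ 2 * (Real.exp ε - 1) := by nlinarith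
    have hexp : 0 ≤ Real.exp (-ε * x) / 4 := by positivity
    nlinarith [mul_nonneg (mul_nonneg hexp hA) h2]

include hε in
lemma psi_mono : MonotoneOn (psiFn ε) (Set.Ici (xstar ε)) := by
  apply monotoneOn_of_deriv_nonneg (convex_Ici _)
  · exact fun y _ => ((psi_hasDerivAt ε y).continuousAt).continuousWithinAt
  · intro x _
    exact ((psi_hasDerivAt ε x).differentiableAt).differentiableWithinAt
  · intro x hx
    rw [interior_Ici] at hx
    rw [psi_deriv_eq hε x, hfac hε x]
    have hE := hE1 hε
    have h1 : 0 ≤ x - xstar ε := by linarith [le_of_lt (Set.mem_Ioi.mp hx)]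
    have h2 : 0 ≤ x - (2 * Real.exp ε / (Real.exp ε - 1) - xstar ε) := by
      have := hv_lt_one hε
      have := xstar_gt_one hε
      linarith [le_of_lt (Set.mem_Ioi.mp hx)]
    have hA : 0 ≤ ε ^ 2 * (Real.exp ε - 1) := by nlinarith
    have hexp : 0 ≤ Real.exp (-ε * x) / 4 := by positivity
    nlinarith [mul_nonneg (mul_nonneg (mul_nonneg hexp hA) h1) h2]

include hε in
lemma psi_min {d : ℝ} (hd : 1 ≤ d) : psiFn ε (xstar ε) ≤ psiFn ε d := by
  have hu1 := xstar_gt_one hε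
  rcases le_total d (xstar ε) with h | h
  · exact psi_anti hε ⟨hd, h⟩ ⟨hu1.le, le_rfl⟩ h
  · exact psi_mono hε (Set.self_mem_Ici) h h

include hε in
lemma phi_tendsto : Filter.Tendsto (phiFn ε) Filter.atTop (nhds 0) := by
  have h1 : Filter.Tendsto (fun x : ℝ => ε * x) Filter.atTop Filter.atTop :=
    Filter.Tendsto.const_mul_atTop hε Filter.tendsto_id
  have h2 := (Real.tendsto_pow_mul_exp_neg_atTop_nhds_zero 1).comp h1
  have h3 := (Real.tendsto_pow_mul_exp_neg_atTop_nhds_zero 2).comp h1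
  have h4 := (h2.const_mul (1 / (2 * ε))).add (h3.const_mul (1 / (4 * ε)))
  simp only [mul_zero, add_zero] at h4
  refine h4.congr fun x => ?_
  unfold phiFn gFn
  have hne : ε ≠ 0 := hε.ne'
  field_simp
  simp only [Function.comp_apply]
  ring

include hε in
lemma psi_xstar_nonpos : psiFn ε (xstar ε) ≤ 0 := by
  have hu1 := xstar_gt_one hε
  refine ge_of_tendsto (phi_tendsto hε) ?_
  rw [Filter.eventually_atTop]
  refine ⟨xstar ε, fun x hx => ?_⟩
  have h1 : psiFn ε (xstar ε) ≤ psiFn ε x := psi_mono hε Set.self_mem_Ici hx hx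
  have h2 : 0 ≤ phiFn ε (x - 1) := by
    unfold phiFn
    exact mul_nonneg (by linarith) (gFn_nonneg hε (by linarith))
  unfold psiFn at h1 ⊢
  linarith

end XS3

/-- The global sensitivity of the per-cell grid quality function under addition of one
tuple is at most `B(ε) = f_ε(x*(ε))`. -/
theorem qual_sensitivity_le (ε : ℝ) (hε : 0 < ε) (a b : ℝ) (ha : 0 ≤ a) (hb : 0 ≤ b) :
    |qualFn ε (a + 1) b - qualFn ε a b| ≤ fFn ε (xstar ε) := by
  have hf : fFn ε (xstar ε) = 1 - psiFn ε (xstar ε) := by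
    unfold fFn psiFn phiFn; ring
  have hnp := psi_xstar_nonpos hε
  rcases le_total b a with hba | hab
  · -- b ≤ a
    have habs1 : |a + 1 - b| = a - b + 1 := by
      rw [abs_of_nonneg (by linarith : (0:ℝ) ≤ a + 1 - b)]; ring
    have habs2 : |a - b| = a - b := abs_of_nonneg (by linarith)
    have hmin1 : min (a + 1) b = b := min_eq_right (by linarith)
    have hmax1 : max (a + 1) b = a + 1 := max_eq_left (by linarith)
    have hmin2 : min a b = b := min_eq_right hba
    have hmax2 : max a b = a := max_eq_left hba
    have hkey : qualFn ε (a + 1) b - qualFn ε a b = psiFn ε (a - b + 1) := by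
      unfold qualFn psiFn phiFn
      rw [habs1, habs2, hmin1, hmax1, hmin2, hmax2]
      have e1 : a - b + 1 - 1 = a - b := by ring
      rw [e1]
      ring
    rw [hkey, hf, abs_le]
    have hb1 := psi_abs_le hε (x := a - b + 1) (by linarith)
    have h2 := psi_min hε (d := a - b + 1) (by linarith)
    rw [abs_le] at hb1
    constructor <;> linarith [hb1.1, hb1.2]
  · rcases le_or_gt (a + 1) b with h1 | h1
    · -- a + 1 ≤ b
      have habs1 : |a + 1 - b| = b - a - 1 := by
        rw [abs_of_nonpos (by linarith)]; ring
      have habs2 : |a - b| = b - a := by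
        rw [abs_of_nonpos (by linarith)]; ring
      have hmin1 : min (a + 1) b = a + 1 := min_eq_left h1
      have hmax1 : max (a + 1) b = b := max_eq_right h1
      have hmin2 : min a b = a := min_eq_left hab
      have hmax2 : max a b = b := max_eq_right hab
      have hkey : qualFn ε (a + 1) b - qualFn ε a b = 1 - psiFn ε (b - a) := by
        unfold qualFn psiFn phiFn
        rw [habs1, habs2, hmin1, hmax1, hmin2, hmax2]
        have e1 : b - a - 1 = b - a - 1 := rfl
        ring_nf
      rw [hkey, hf, abs_le]
      have hb1 := psi_abs_le hε (x := b - a) (by linarith)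
      have h2 := psi_min hε (d := b - a) (by linarith)
      rw [abs_le] at hb1
      constructor <;> linarith [hb1.1, hb1.2]
    · -- a ≤ b < a + 1
      have habs1 : |a + 1 - b| = 1 - (b - a) := by
        rw [abs_of_nonneg (by linarith)]; ring
      have habs2 : |a - b| = b - a := by
        rw [abs_of_nonpos (by linarith)]; ring
      have hmin1 : min (a + 1) b = b := min_eq_right (by linarith)
      have hmax1 : max (a + 1) b = a + 1 := max_eq_left (by linarith)
      have hmin2 : min a b = a := min_eq_left hab
      have hmax2 : max a b = b := max_eq_right hab
      have hkey : qualFn ε (a + 1) b - qualFn ε a b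
          = (b - a) + (1 - (b - a)) * gFn ε (1 - (b - a)) - (b - a) * gFn ε (b - a) := by
        unfold qualFn
        rw [habs1, habs2, hmin1, hmax1, hmin2, hmax2]
        ring
      rw [hkey, hf, abs_le]
      have g1 := gFn_le_half hε (t := 1 - (b - a)) (by linarith)
      have g2 := gFn_nonneg hε (t := 1 - (b - a)) (by linarith)
      have g3 := gFn_le_half hε (t := b - a) (by linarith)
      have g4 := gFn_nonneg hε (t := b - a) (by linarith)
      constructor <;> nlinarith
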